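/- Let p be a prime number. The polynomial f(X) = X^{p−1} + X^{p−2} + ⋯ + X + 1 is irreducible over the field ℚ(i) of Gaussian rationals; that is, f cannot be written as a product of two nonconstant polynomials with coefficients in ℚ(i). -/

import Mathlib

open Polynomial IntermediateField

lemma aux_I_primitive : IsPrimitiveRoot (Complex.I) 4 := by
  have h4 : Complex.I ^ 4 = 1 := by
    simp [pow_succ, Complex.I_mul_I]
  constructor
  · exact h4
  · intro l hl
    have hmod : Complex.I ^ (l % 4) = 1 := by
      conv at hl => rw [← Nat.div_add_mod l 4, pow_add, pow_mul, h4, one_pow, one_mul]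
      exact hl
    have hb : l % 4 < 4 := Nat.mod_lt _ (by norm_num)
    interval_cases h : l % 4
    · omega
    · exact absurd hmod (by simp [Complex.ext_iff])
    · rw [sq, Complex.I_mul_I] at hmod; norm_num at hmod
    · rw [pow_succ, sq, Complex.I_mul_I, neg_one_mul] at hmod
      rw [neg_eq_iff_eq_neg] at hmod
      exact absurd hmod (by simp [Complex.ext_iff])

lemma aux_finrank_K : Module.finrank ℚ ℚ⟮Complex.I⟯ = 2 := by
  have hI : IsIntegral ℚ Complex.I := by
    refine ⟨X ^ 2 + 1, monic_X_pow_add_C 1 (by norm_num), ?_⟩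
    simp [Complex.I_sq]
  rw [IntermediateField.adjoin.finrank hI,
    ← Polynomial.cyclotomic_eq_minpoly_rat aux_I_primitive (by norm_num),
    Polynomial.natDegree_cyclotomic]
  decide

set_option maxHeartbeats 1000000 in
theorem stmt8 (p : ℕ) (hp : p.Prime) :
    Irreducible (∑ i ∈ Finset.range p, (X : Polynomial ℚ⟮Complex.I⟯) ^ i) := by
  haveI : Fact p.Prime := ⟨hp⟩
  rw [← Polynomial.cyclotomic_prime]
  by_cases hp2 : p = 2
  · subst hp2
    rw [Polynomial.cyclotomic_two]
    exact Polynomial.irreducible_of_degree_eq_one (by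
      simpa using Polynomial.degree_X_add_C (1 : ℚ⟮Complex.I⟯))
  have hp0 : p ≠ 0 := hp.ne_zero
  haveI : NeZero p := ⟨hp0⟩
  set K := ℚ⟮Complex.I⟯ with hK
  set ζ : ℂ := Complex.exp (2 * Real.pi * Complex.I / p) with hζdef
  have hζ : IsPrimitiveRoot ζ p := Complex.isPrimitiveRoot_exp p hp0
  have hint : IsIntegral K ζ := by
    refine ⟨X ^ p - 1, monic_X_pow_sub_C 1 hp0, ?_⟩
    simp [hζ.pow_eq_one]
  have haev : (Polynomial.aeval ζ) (Polynomial.cyclotomic p K) = 0 := by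
    rw [Polynomial.aeval_def, ← Polynomial.eval_map, Polynomial.map_cyclotomic]
    exact (Polynomial.isRoot_cyclotomic_iff.mpr hζ)
  have hdvd : minpoly K ζ ∣ Polynomial.cyclotomic p K := minpoly.dvd K ζ haev
  -- upper bound
  have hdle : (minpoly K ζ).natDegree ≤ p - 1 := by
    have h := Polynomial.natDegree_le_of_dvd hdvd (Polynomial.cyclotomic_ne_zero p K)
    rwa [Polynomial.natDegree_cyclotomic, Nat.totient_prime hp] at h
  -- lower bound via the primitive 4p-th root of unity
  set L := K⟮ζ⟯ with hL
  haveI : FiniteDimensional K L := IntermediateField.adjoin.finiteDimensional hint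
  have hIint : IsIntegral ℚ Complex.I := by
    refine ⟨X ^ 2 + 1, monic_X_pow_add_C 1 (by norm_num), ?_⟩
    simp [Complex.I_sq]
  haveI : FiniteDimensional ℚ K := IntermediateField.adjoin.finiteDimensional hIint
  haveI : IsScalarTower ℚ K L := IsScalarTower.of_algebraMap_eq' (Subsingleton.elim _ _)
  haveI : FiniteDimensional ℚ L := FiniteDimensional.trans ℚ K L
  set η : ℂ := Complex.exp (2 * Real.pi * Complex.I / ((4 * p : ℕ) : ℂ)) with hηdef
  have hη : IsPrimitiveRoot η (4 * p) := Complex.isPrimitiveRoot_exp (4 * p) (Nat.mul_ne_zero (by norm_num) hp0)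
  have hη0 : η ≠ 0 := Complex.exp_ne_zero _
  have hη4 : η ^ 4 = ζ := by
    rw [hηdef, hζdef, ← Complex.exp_nat_mul]
    congr 1
    have : (p : ℂ) ≠ 0 := by exact_mod_cast hp0
    field_simp
    simp
  have hηp : η ^ p = Complex.I := by
    rw [hηdef, ← Complex.exp_nat_mul]
    have : (p : ℂ) ≠ 0 := by exact_mod_cast hp0
    have harg : (p : ℂ) * (2 * Real.pi * Complex.I / ((4 * p : ℕ) : ℂ)) =
        (↑(Real.pi / 2) : ℂ) * Complex.I := by
      push_cast
      field_simp
      ring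
    rw [harg, Complex.exp_mul_I]
    simp [Real.cos_pi_div_two, Real.sin_pi_div_two]
  -- Bezout: 4 a + p b = 1
  have hcop : Nat.Coprime 4 p := by
    have h2 : Nat.Coprime 2 p :=
      (Nat.coprime_primes Nat.prime_two hp).mpr (fun h => hp2 h.symm)
    simpa using (Nat.Coprime.pow_left 2 h2 : Nat.Coprime (2 ^ 2) p)
  have hbez : (4 : ℤ) * Nat.gcdA 4 p + p * Nat.gcdB 4 p = 1 := by
    have := Nat.gcd_eq_gcd_ab 4 p
    rw [hcop] at this
    exact_mod_cast this.symm
  have hηmem : η ∈ L := by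
    have hζmem : ζ ∈ L := IntermediateField.mem_adjoin_simple_self K ζ
    have hImem : Complex.I ∈ L := by
      have hIK : Complex.I ∈ K := IntermediateField.mem_adjoin_simple_self ℚ Complex.I
      exact L.algebraMap_mem ⟨Complex.I, hIK⟩
    have key : η = ζ ^ (Nat.gcdA 4 p) * Complex.I ^ (Nat.gcdB 4 p) :=
      calc η = η ^ ((4 : ℤ) * Nat.gcdA 4 p + (p : ℤ) * Nat.gcdB 4 p) := by
              rw [hbez, zpow_one]
        _ = (η ^ (4 : ℤ)) ^ Nat.gcdA 4 p * (η ^ (p : ℤ)) ^ Nat.gcdB 4 p := by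
              rw [zpow_add₀ hη0, zpow_mul, zpow_mul]
        _ = ζ ^ Nat.gcdA 4 p * Complex.I ^ Nat.gcdB 4 p := by
              rw [show (4 : ℤ) = ((4 : ℕ) : ℤ) from rfl, show (p : ℤ) = ((p : ℕ) : ℤ) from rfl,
                zpow_natCast, zpow_natCast, hη4, hηp]
    rw [key]
    exact mul_mem (zpow_mem hζmem _) (zpow_mem hImem _)
  set η' : L := ⟨η, hηmem⟩ with hη'def
  have hη' : IsPrimitiveRoot η' (4 * p) := by
    apply IsPrimitiveRoot.of_map_of_injective (f := (algebraMap L ℂ))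
      _ (algebraMap L ℂ).injective
    exact hη
  have hminη : Polynomial.cyclotomic (4 * p) ℚ = minpoly ℚ η' :=
    Polynomial.cyclotomic_eq_minpoly_rat hη' (Nat.pos_of_ne_zero (Nat.mul_ne_zero (by norm_num) hp0))
  have htot : (4 * p).totient = 2 * (p - 1) := by
    rw [Nat.totient_mul hcop, Nat.totient_prime hp, show Nat.totient 4 = 2 from by decide]
  have hlow : 2 * (p - 1) ≤ Module.finrank ℚ L := by
    have h1 := minpoly.natDegree_le (A := ℚ) η'
    rwa [← hminη, Polynomial.natDegree_cyclotomic, htot] at h1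
  have hfin : Module.finrank ℚ L = 2 * (minpoly K ζ).natDegree := by
    rw [← Module.finrank_mul_finrank ℚ K L, aux_finrank_K,
      IntermediateField.adjoin.finrank hint]
  have hdge : p - 1 ≤ (minpoly K ζ).natDegree := by
    rw [hfin] at hlow
    omega
  -- conclude
  have heq : Polynomial.cyclotomic p K = minpoly K ζ := by
    apply Polynomial.eq_of_monic_of_dvd_of_natDegree_le (minpoly.monic hint)
      (Polynomial.cyclotomic.monic p K) hdvd
    rw [Polynomial.natDegree_cyclotomic, Nat.totient_prime hp]
    exact hdge
  rw [heq]
  exact minpoly.irreducible hint
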